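/- Let ω = (ω₀, …, ω_{n+1}) be a primitive algebraic key sequence and θ ∈ (ℂ*)ⁿ, and let Ĝ₁, …, Ĝ_n ∈ Â := ℂ[ŵ, ŷ₁, …, ŷ_{n+1}] be as above, Ĝ_k := ŵ^{α_k·ω_k − ω_{k+1}}·ŷ_{k+1} − ( ŷ_k^{α_k} − θ_k·∏_{j=1}^{k−1} ŷ_j^{β_{k,j}} ). Let ω̂ := (0, ω₁, …, ω_{n+1}) assign weight 0 to ŵ and weight ω_j to ŷ_j, and define the relation ≺ on exponent vectors β, β′ ∈ ℕ^{n+2} (coordinates ordered ŵ, ŷ₁, …, ŷ_{n+1}) by: β ≺ β′ iff either (β − β′)·ω̂ < 0, or (β − β′)·ω̂ = 0 and the rightmost nonzero entry of β − β′ is negative. Then (1) ≺ induces a monomial order on Â (a linear order on monomials, compatible with multiplication, in which 1 is the least monomial), and (2) for each 1 ≤ k ≤ n the ≺-largest monomial occurring in Ĝ_k is ŷ_k^{α_k} (which occurs in Ĝ_k with coefficient −1). -/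

import Mathlib

open Fin.NatCast

/-- `dks ω k` is `gcd(|ω₀|, …, |ω_k|)`. -/
def dks (ω : ℕ → ℤ) (k : ℕ) : ℕ :=
  (Finset.range (k + 1)).gcd fun j => (ω j).natAbs

/-- `alphaK ω k` is `α_k = d_{k−1}/d_k`. -/
def alphaK (ω : ℕ → ℤ) (k : ℕ) : ℕ := dks ω (k - 1) / dks ω k

/-- A key sequence `(ω₀, …, ω_{n+1})`. -/
def IsKeySequence (n : ℕ) (ω : ℕ → ℤ) : Prop :=
  1 ≤ ω 0 ∧ dks ω (n + 1) = 1 ∧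
    ∀ k, 1 ≤ k → k ≤ n → ω (k + 1) < (alphaK ω k : ℤ) * ω k

/-- A key sequence is primitive iff `ω_{n+1} > 0`. -/
def IsPrimitive (n : ℕ) (ω : ℕ → ℤ) : Prop := 0 < ω (n + 1)

/-- `β k` is, for `1 ≤ k ≤ n`, the unique representation tuple of `α_k·ω_k`. -/
def IsRepTuple (n : ℕ) (ω : ℕ → ℤ) (β : ℕ → ℕ → ℤ) : Prop :=
  ∀ k, 1 ≤ k → k ≤ n →
    (∀ j, 1 ≤ j → j < k → 0 ≤ β k j ∧ β k j < (alphaK ω j : ℤ)) ∧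
      (alphaK ω k : ℤ) * ω k = ∑ j ∈ Finset.range k, β k j * ω j

/-- The polynomial `Ĝ_k = ŵ^{α_k·ω_k − ω_{k+1}}·ŷ_{k+1} − (ŷ_k^{α_k} − θ_k·∏_{j=1}^{k−1} ŷ_j^{β_{k,j}})`
in `Â = ℂ[ŵ, ŷ₁, …, ŷ_{n+1}]`, where `ŵ` is the variable of index `0` and `ŷ_j` the
variable of index `j`. -/
noncomputable def Ghat (n : ℕ) (ω : ℕ → ℤ) (θ : ℕ → ℂ) (β : ℕ → ℕ → ℤ) (k : ℕ) :
    MvPolynomial (Fin (n + 2)) ℂ :=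
  MvPolynomial.X (0 : Fin (n + 2)) ^ (((alphaK ω k : ℤ) * ω k - ω (k + 1)).toNat) *
      MvPolynomial.X ((k + 1 : ℕ) : Fin (n + 2)) -
    (MvPolynomial.X ((k : ℕ) : Fin (n + 2)) ^ alphaK ω k -
      MvPolynomial.C (θ k) *
        ∏ j ∈ Finset.Ico 1 k, MvPolynomial.X ((j : ℕ) : Fin (n + 2)) ^ (β k j).toNat)

/-- The ideal `Î = (Ĝ₁, …, Ĝ_n) ⊆ Â`. -/
noncomputable def Ihat (n : ℕ) (ω : ℕ → ℤ) (θ : ℕ → ℂ) (β : ℕ → ℕ → ℤ) :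
    Ideal (MvPolynomial (Fin (n + 2)) ℂ) :=
  Ideal.span (Ghat n ω θ β '' Set.Icc 1 n)


/-- The algebraicity condition: `α_k·ω_k ∈ ℤ_{≥0}⟨ω₀, …, ω_{k−1}⟩` for `1 ≤ k ≤ n`. -/
def IsAlgebraicKeySeq (n : ℕ) (ω : ℕ → ℤ) : Prop :=
  ∀ k, 1 ≤ k → k ≤ n → ∃ c : ℕ → ℕ,
    (alphaK ω k : ℤ) * ω k = ∑ j ∈ Finset.range k, (c j : ℤ) * ω j

/-- The weight vector `ω̂ = (0, ω₁, …, ω_{n+1})`: weight `0` for `ŵ` and `ω_j` for `ŷ_j`. -/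
def omegaHat (n : ℕ) (ω : ℕ → ℤ) (i : Fin (n + 2)) : ℤ :=
  if i = 0 then 0 else ω (i : ℕ)

/-- The order `≺` on exponent vectors: `u ≺ v` iff `(u − v)·ω̂ < 0`, or
`(u − v)·ω̂ = 0` and the rightmost nonzero entry of `u − v` is negative. -/
def Prec (n : ℕ) (ω : ℕ → ℤ) (u v : Fin (n + 2) →₀ ℕ) : Prop :=
  (∑ i : Fin (n + 2), ((u i : ℤ) - (v i : ℤ)) * omegaHat n ω i) < 0 ∨
    ((∑ i : Fin (n + 2), ((u i : ℤ) - (v i : ℤ)) * omegaHat n ω i) = 0 ∧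
      ∃ i : Fin (n + 2), (u i : ℤ) < (v i : ℤ) ∧ ∀ j, i < j → u j = v j)


open Finset

/-- weight of an exponent vector -/
def Wt (n : ℕ) (ω : ℕ → ℤ) (u : Fin (n + 2) →₀ ℕ) : ℤ :=
  ∑ i : Fin (n + 2), (u i : ℤ) * omegaHat n ω i

lemma sumdiff_eq (n : ℕ) (ω : ℕ → ℤ) (u v : Fin (n + 2) →₀ ℕ) :
    (∑ i : Fin (n + 2), ((u i : ℤ) - (v i : ℤ)) * omegaHat n ω i)
      = Wt n ω u - Wt n ω v := by
  simp [Wt, sub_mul, Finset.sum_sub_distrib]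

lemma prec_iff (n : ℕ) (ω : ℕ → ℤ) (u v : Fin (n + 2) →₀ ℕ) :
    Prec n ω u v ↔ (Wt n ω u < Wt n ω v ∨
      (Wt n ω u = Wt n ω v ∧
        ∃ i : Fin (n + 2), (u i : ℤ) < (v i : ℤ) ∧ ∀ j, i < j → u j = v j)) := by
  rw [Prec, sumdiff_eq, sub_neg, sub_eq_zero]

lemma Wt_add (n : ℕ) (ω : ℕ → ℤ) (u v : Fin (n + 2) →₀ ℕ) :
    Wt n ω (u + v) = Wt n ω u + Wt n ω v := by
  simp [Wt, Finsupp.add_apply, add_mul, Finset.sum_add_distrib]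

lemma Wt_single (n : ℕ) (ω : ℕ → ℤ) (i : Fin (n + 2)) (e : ℕ) :
    Wt n ω (Finsupp.single i e) = (e : ℤ) * omegaHat n ω i := by
  rw [Wt, Finset.sum_eq_single i]
  · simp
  · intro b _ hb
    rw [Finsupp.single_eq_of_ne' (Ne.symm hb)]
    simp
  · simp

lemma Wt_sum (n : ℕ) (ω : ℕ → ℤ) {A : Type*} (s : Finset A) (f : A → (Fin (n + 2) →₀ ℕ)) :
    Wt n ω (∑ a ∈ s, f a) = ∑ a ∈ s, Wt n ω (f a) := by
  induction s using Finset.cons_induction with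
  | empty => simp [Wt]
  | cons a s ha ih => rw [Finset.sum_cons, Finset.sum_cons, Wt_add, ih]




lemma prec_irrefl (n : ℕ) (ω : ℕ → ℤ) (u : Fin (n + 2) →₀ ℕ) : ¬ Prec n ω u u := by
  rw [prec_iff]
  rintro (h | ⟨-, i, hi, -⟩)
  · exact lt_irrefl _ h
  · exact lt_irrefl _ hi

lemma prec_trans (n : ℕ) (ω : ℕ → ℤ) (u v w : Fin (n + 2) →₀ ℕ)
    (h1 : Prec n ω u v) (h2 : Prec n ω v w) : Prec n ω u w := by
  rw [prec_iff] at h1 h2 ⊢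
  rcases h1 with h1 | ⟨h1, i, hi, hi'⟩ <;> rcases h2 with h2 | ⟨h2, i', hj, hj'⟩
  · exact Or.inl (h1.trans h2)
  · exact Or.inl (h1.trans_eq h2)
  · exact Or.inl (h1.trans_lt h2)
  · refine Or.inr ⟨h1.trans h2, ?_⟩
    rcases lt_trichotomy i i' with h | h | h
    · exact ⟨i', by rw [hi' i' h]; exact hj, fun j hji => (hi' j (h.trans hji)).trans (hj' j hji)⟩
    · subst h
      exact ⟨i, hi.trans hj, fun j hji => (hi' j hji).trans (hj' j hji)⟩
    · refine ⟨i, ?_, fun j hji => (hi' j hji).trans (hj' j (h.trans hji))⟩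
      rw [← hj' i h]; exact hi

lemma prec_total (n : ℕ) (ω : ℕ → ℤ) (u v : Fin (n + 2) →₀ ℕ) (huv : u ≠ v) :
    Prec n ω u v ∨ Prec n ω v u := by
  rw [prec_iff, prec_iff]
  rcases lt_trichotomy (Wt n ω u) (Wt n ω v) with h | h | h
  · exact Or.inl (Or.inl h)
  · -- weights equal: find the largest index where they differ
    have hne : ∃ i, u i ≠ v i := by
      by_contra hc
      push_neg at hc
      exact huv (Finsupp.ext hc)
    set s : Finset (Fin (n + 2)) := Finset.univ.filter (fun i => u i ≠ v i) with hs
    have hsne : s.Nonempty := by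
      obtain ⟨i, hi⟩ := hne
      exact ⟨i, by simp [hs, hi]⟩
    set i := s.max' hsne with hidef
    have hi : u i ≠ v i := by
      have := s.max'_mem hsne
      simpa [hs] using this
    have hcast : ∀ j, i < j → u j = v j := by
      intro j hj
      by_contra hc
      have : j ∈ s := by simp [hs, hc]
      exact absurd (Finset.le_max' s j this) (not_le.mpr hj)
    rcases lt_or_gt_of_ne hi with hlt | hgt
    · exact Or.inl (Or.inr ⟨h, i, by exact_mod_cast hlt, hcast⟩)
    · exact Or.inr (Or.inr ⟨h.symm, i, by exact_mod_cast hgt, fun j hj => (hcast j hj).symm⟩)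
  · exact Or.inr (Or.inl h)

lemma prec_add (n : ℕ) (ω : ℕ → ℤ) (u v w : Fin (n + 2) →₀ ℕ)
    (h : Prec n ω u v) : Prec n ω (u + w) (v + w) := by
  rw [prec_iff] at h ⊢
  rw [Wt_add, Wt_add]
  rcases h with h | ⟨h, i, hi, hi'⟩
  · exact Or.inl (by omega)
  · refine Or.inr ⟨by omega, i, ?_, ?_⟩
    · simp only [Finsupp.add_apply]
      push_cast
      omega
    · intro j hj
      simp only [Finsupp.add_apply, hi' j hj]

lemma prec_zero (n : ℕ) (ω : ℕ → ℤ) (hpos : ∀ j, 1 ≤ j → j ≤ n + 1 → 0 < ω j)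
    (u : Fin (n + 2) →₀ ℕ) (hu : u ≠ 0) : Prec n ω 0 u := by
  rw [prec_iff]
  have hWnn : 0 ≤ Wt n ω u := by
    apply Finset.sum_nonneg
    intro i _
    apply mul_nonneg (by positivity)
    rw [omegaHat]
    split
    · exact le_refl 0
    · rename_i hi0
      refine le_of_lt (hpos i ?_ ?_)
      · rcases Nat.eq_zero_or_pos (i : ℕ) with h0 | h1
        · exact absurd (Fin.ext h0) hi0
        · exact h1
      · omega
  have hW0 : Wt n ω (0 : Fin (n + 2) →₀ ℕ) = 0 := by simp [Wt]
  rcases hWnn.lt_or_eq with h | h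
  · exact Or.inl (by rw [hW0]; exact h)
  · refine Or.inr ⟨by rw [hW0, ← h], ?_⟩
    have hne : ∃ i, u i ≠ 0 := by
      by_contra hc
      push_neg at hc
      exact hu (Finsupp.ext fun i => hc i)
    set s : Finset (Fin (n + 2)) := Finset.univ.filter (fun i => u i ≠ 0) with hs
    have hsne : s.Nonempty := by
      obtain ⟨i, hi⟩ := hne
      exact ⟨i, by simp [hs, hi]⟩
    set i := s.max' hsne with hidef
    have hi : u i ≠ 0 := by
      have := s.max'_mem hsne
      simpa [hs] using this
    refine ⟨i, ?_, fun j hj => ?_⟩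
    · have := Nat.pos_of_ne_zero hi
      simp only [Finsupp.coe_zero, Pi.zero_apply]
      exact_mod_cast this
    · by_contra hc
      have hj' : u j ≠ 0 := fun h0 => hc (by simp [h0])
      have : j ∈ s := by simp [hs, hj']
      exact absurd (Finset.le_max' s j this) (not_le.mpr hj)


lemma dks_pos (ω : ℕ → ℤ) (h0 : 1 ≤ ω 0) (k : ℕ) : 0 < dks ω k := by
  rcases Nat.eq_zero_or_pos (dks ω k) with h | h
  · rw [dks, Finset.gcd_eq_zero_iff] at h
    have := h 0 (Finset.mem_range.mpr (Nat.succ_pos k))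
    omega
  · exact h

lemma dks_succ (ω : ℕ → ℤ) (k : ℕ) :
    dks ω (k + 1) = Nat.gcd ((ω (k + 1)).natAbs) (dks ω k) := by
  rw [dks, dks, Finset.range_add_one, Finset.gcd_insert]
  rfl

lemma dks_dvd (ω : ℕ → ℤ) {j k : ℕ} (hjk : j ≤ k) : (dks ω k : ℤ) ∣ ω j := by
  have h : dks ω k ∣ (ω j).natAbs :=
    Finset.gcd_dvd (Finset.mem_range.mpr (by omega : j < k + 1))
  exact dvd_trans (Int.natCast_dvd_natCast.mpr h) (Int.natAbs_dvd.mpr dvd_rfl)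

lemma dks_succ_dvd (ω : ℕ → ℤ) (k : ℕ) : dks ω (k + 1) ∣ dks ω k := by
  rw [dks_succ]; exact Nat.gcd_dvd_right _ _

lemma omega_pos (n : ℕ) (ω : ℕ → ℤ) (hω : IsKeySequence n ω) (hprim : IsPrimitive n ω) :
    ∀ k, k ≤ n + 1 → 0 < ω k := by
  obtain ⟨h0, -, hkey⟩ := hω
  have key : ∀ m k, k + m = n + 1 → 0 < ω k := by
    intro m
    induction m with
    | zero => intro k hk; simpa [show k = n + 1 by omega, IsPrimitive] using hprim
    | succ m ih =>
      intro k hk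
      have hk1 : 0 < ω (k + 1) := ih (k + 1) (by omega)
      rcases Nat.eq_zero_or_pos k with rfl | hkpos
      · omega
      · have h2 := hkey k hkpos (by omega)
        have h3 : 0 < (alphaK ω k : ℤ) * ω k := lt_trans hk1 h2
        by_contra hc
        push_neg at hc
        have : (alphaK ω k : ℤ) * ω k ≤ 0 :=
          mul_nonpos_of_nonneg_of_nonpos (by positivity) hc
        omega
  intro k hk
  exact key (n + 1 - k) k (by omega)

lemma alpha_pos (n : ℕ) (ω : ℕ → ℤ) (hω : IsKeySequence n ω) (hprim : IsPrimitive n ω) :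
    ∀ k, 1 ≤ k → k ≤ n → 0 < alphaK ω k := by
  intro k h1 h2
  have h3 := hω.2.2 k h1 h2
  have h4 : 0 < ω (k + 1) := omega_pos n ω hω hprim (k + 1) (by omega)
  by_contra hc
  have : alphaK ω k = 0 := by omega
  rw [this] at h3
  simp at h3
  omega

/-- key divisibility: if a combination with the tail vanishes, α_{k+1} divides γ_{k+1} -/
lemma alpha_dvd (n : ℕ) (ω : ℕ → ℤ) (h0 : 1 ≤ ω 0) (k : ℕ) (γ : ℕ → ℤ)
    (hsum : ∑ j ∈ Finset.range (k + 2), γ j * ω j = 0) :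
    (alphaK ω (k + 1) : ℤ) ∣ γ (k + 1) := by
  set g := dks ω k with hg
  set g' := dks ω (k + 1) with hg'
  have hgpos : 0 < g := dks_pos ω h0 k
  have hg'pos : 0 < g' := dks_pos ω h0 (k + 1)
  have hdvd : g' ∣ g := dks_succ_dvd ω k
  have halpha : alphaK ω (k + 1) * g' = g := by
    rw [alphaK]
    exact Nat.div_mul_cancel hdvd
  -- g divides γ_{k+1} * ω_{k+1}
  have h1 : (g : ℤ) ∣ γ (k + 1) * ω (k + 1) := by
    have h2 : (g : ℤ) ∣ ∑ j ∈ Finset.range (k + 1), γ j * ω j := by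
      apply Finset.dvd_sum
      intro j hj
      have hj' := Finset.mem_range.mp hj
      exact Dvd.dvd.mul_left (dks_dvd ω (by omega : j ≤ k)) _
    rw [Finset.sum_range_succ] at hsum
    have : γ (k + 1) * ω (k + 1) = -(∑ j ∈ Finset.range (k + 1), γ j * ω j) := by omega
    rw [this]
    exact h2.neg_right
  -- write ω_{k+1} = g' * w
  obtain ⟨w, hw⟩ : (g' : ℤ) ∣ ω (k + 1) := dks_dvd ω (le_refl (k + 1))
  have hcop : Nat.Coprime (alphaK ω (k + 1)) w.natAbs := by
    have hgcd : Nat.gcd g ((ω (k + 1)).natAbs) = g' := by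
      rw [hg', dks_succ, Nat.gcd_comm]
    have hwabs : w.natAbs = (ω (k + 1)).natAbs / g' := by
      rw [hw, Int.natAbs_mul, Int.natAbs_natCast]
      exact (Nat.mul_div_cancel_left _ hg'pos).symm
    have h5 := Nat.coprime_div_gcd_div_gcd (m := g) (n := (ω (k + 1)).natAbs)
      (by rw [hgcd]; omega)
    rw [hgcd] at h5
    rw [hwabs]
    have halpha' : alphaK ω (k + 1) = g / g' := by rw [alphaK, Nat.add_sub_cancel]
    rw [halpha']
    exact h5
  have h3 : (alphaK ω (k + 1) : ℤ) ∣ γ (k + 1) * w := by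
    have h4 : ((alphaK ω (k + 1) : ℤ) * g') ∣ (γ (k + 1) * w) * g' := by
      have he2 : (γ (k + 1) * w) * (g' : ℤ) = γ (k + 1) * ω (k + 1) := by rw [hw]; ring
      have hg2 : (alphaK ω (k + 1) : ℤ) * (g' : ℤ) = (g : ℤ) := by exact_mod_cast halpha
      rw [he2, hg2]
      exact h1
    exact (mul_dvd_mul_iff_right (by exact_mod_cast hg'pos.ne' : (g' : ℤ) ≠ 0)).mp h4
  have hcop' : IsCoprime (alphaK ω (k + 1) : ℤ) w := by
    rw [Int.isCoprime_iff_gcd_eq_one, Int.gcd]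
    simpa using hcop
  exact hcop'.dvd_of_dvd_mul_right h3

/-- uniqueness: a vanishing combination with small coefficients is zero -/
lemma zero_rep (n : ℕ) (ω : ℕ → ℤ) (h0 : 1 ≤ ω 0) :
    ∀ k, ∀ γ : ℕ → ℤ, (∑ j ∈ Finset.range (k + 1), γ j * ω j = 0) →
      (∀ j, 1 ≤ j → j ≤ k → |γ j| < (alphaK ω j : ℤ)) → ∀ j, j ≤ k → γ j = 0 := by
  intro k
  induction k with
  | zero =>
    intro γ hsum _ j hj
    interval_cases j
    simp [Finset.sum_range_one] at hsum
    rcases hsum with h | h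
    · exact h
    · omega
  | succ k ih =>
    intro γ hsum hsmall j hj
    have htop : γ (k + 1) = 0 := by
      have hdvd := alpha_dvd n ω h0 k γ hsum
      have hlt := hsmall (k + 1) (by omega) (le_refl _)
      by_contra hc
      have h6 : (alphaK ω (k + 1) : ℤ) ∣ |γ (k + 1)| := (dvd_abs _ _).mpr hdvd
      have := Int.le_of_dvd (abs_pos.mpr hc) h6
      omega
    rcases Nat.lt_or_ge j (k + 1) with hjk | hjk
    · apply ih γ ?_ (fun j h1 h2 => hsmall j h1 (by omega)) j (by omega)
      rw [Finset.sum_range_succ, htop] at hsum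
      simpa using hsum
    · have : j = k + 1 := by omega
      rw [this]; exact htop

/-- reduction of a nonnegative representation to the canonical one -/
lemma reduce (n : ℕ) (ω : ℕ → ℤ) (hω : IsKeySequence n ω) (hprim : IsPrimitive n ω)
    (halg : IsAlgebraicKeySeq n ω) :
    ∀ k, k ≤ n + 1 → ∀ c : ℕ → ℕ, ∃ b : ℕ → ℕ,
      (∀ j, 1 ≤ j → j < k → b j < alphaK ω j) ∧
      ∑ j ∈ Finset.range k, (b j : ℤ) * ω j = ∑ j ∈ Finset.range k, (c j : ℤ) * ω j := by
  intro k
  induction k with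
  | zero => exact fun _ c => ⟨c, by omega, rfl⟩
  | succ k ih =>
    intro hk c
    rcases Nat.eq_zero_or_pos k with rfl | hkpos
    · exact ⟨c, by omega, rfl⟩
    have hkn : k ≤ n := by omega
    have hαpos := alpha_pos n ω hω hprim k hkpos hkn
    obtain ⟨e, he⟩ := halg k hkpos hkn
    set q := c k / alphaK ω k with hq
    set r := c k % alphaK ω k with hr
    have hrlt : r < alphaK ω k := Nat.mod_lt _ hαpos
    obtain ⟨b', hb'1, hb'2⟩ := ih (by omega) (fun j => c j + q * e j)
    refine ⟨fun j => if j = k then r else b' j, ?_, ?_⟩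
    · intro j h1 h2
      rcases Nat.lt_or_ge j k with hjk | hjk
      · simp only [if_neg (by omega : j ≠ k)]
        exact hb'1 j h1 hjk
      · have : j = k := by omega
        simp [this, hrlt]
    · rw [Finset.sum_range_succ, Finset.sum_range_succ]
      have hcongr : ∑ j ∈ Finset.range k, ((if j = k then r else b' j : ℕ) : ℤ) * ω j
          = ∑ j ∈ Finset.range k, (b' j : ℤ) * ω j := by
        apply Finset.sum_congr rfl
        intro j hj
        rw [if_neg (by simp at hj; omega : j ≠ k)]
      have hval : (if k = k then r else b' k) = r := if_pos rfl
      rw [hcongr]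
      simp only [if_true]
      rw [hb'2]
      have hsplit : ∑ j ∈ Finset.range k, ((c j + q * e j : ℕ) : ℤ) * ω j
          = ∑ j ∈ Finset.range k, (c j : ℤ) * ω j + q * ∑ j ∈ Finset.range k, (e j : ℤ) * ω j := by
        rw [Finset.mul_sum, ← Finset.sum_add_distrib]
        apply Finset.sum_congr rfl
        intro j _
        push_cast
        ring
      rw [hsplit, ← he]
      have hnat : alphaK ω k * q + r = c k := by rw [hq, hr]; exact Nat.div_add_mod _ _
      have : (c k : ℤ) = (q : ℤ) * alphaK ω k + r := by
        have h7 := congrArg (Nat.cast (R := ℤ)) hnat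
        push_cast at h7
        linarith
      rw [this]
      ring

/-- the 0-th coefficient of the canonical representation is nonnegative -/
lemma beta0_nonneg (n : ℕ) (ω : ℕ → ℤ) (β : ℕ → ℕ → ℤ) (hω : IsKeySequence n ω)
    (hprim : IsPrimitive n ω) (halg : IsAlgebraicKeySeq n ω) (hβ : IsRepTuple n ω β)
    {k : ℕ} (h1 : 1 ≤ k) (h2 : k ≤ n) : 0 ≤ β k 0 := by
  obtain ⟨hsmall, hsum⟩ := hβ k h1 h2
  obtain ⟨c, hc⟩ := halg k h1 h2
  obtain ⟨b, hb1, hb2⟩ := reduce n ω hω hprim halg k (by omega) c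
  have hzero : ∀ j, j ≤ k - 1 → β k j - b j = 0 := by
    apply zero_rep n ω hω.1 (k - 1) (fun j => β k j - b j)
    · have hk1 : k - 1 + 1 = k := by omega
      rw [hk1]
      have hsplit : ∑ j ∈ Finset.range k, (β k j - (b j : ℤ)) * ω j
          = ∑ j ∈ Finset.range k, β k j * ω j - ∑ j ∈ Finset.range k, (b j : ℤ) * ω j := by
        rw [← Finset.sum_sub_distrib]
        apply Finset.sum_congr rfl
        intro j _
        ring
      rw [hsplit, ← hsum, hb2, ← hc, sub_self]
    · intro j hj1 hj2
      have hs := hsmall j hj1 (by omega)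
      have hbj := hb1 j hj1 (by omega)
      rw [abs_lt]
      constructor
      · have : (0 : ℤ) ≤ β k j := hs.1
        have : (b j : ℤ) < alphaK ω j := by exact_mod_cast hbj
        omega
      · have : (0 : ℤ) ≤ b j := by positivity
        omega
  have := hzero 0 (by omega)
  have hb0 : (0 : ℤ) ≤ b 0 := by positivity
  omega
lemma prod_X_pow {σ : Type*} {R : Type*} [CommSemiring R] (s : Finset ℕ) (f : ℕ → σ)
    (e : ℕ → ℕ) :
    ∏ j ∈ s, (MvPolynomial.X (f j) : MvPolynomial σ R) ^ e j
      = MvPolynomial.monomial (∑ j ∈ s, Finsupp.single (f j) (e j)) 1 := by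
  induction s using Finset.cons_induction with
  | empty => simp
  | cons a s ha ih =>
    rw [Finset.prod_cons, Finset.sum_cons, ih, MvPolynomial.X_pow_eq_monomial,
      MvPolynomial.monomial_mul, one_mul]

theorem stmt7' (n : ℕ) (ω : ℕ → ℤ) (θ : ℕ → ℂ) (β : ℕ → ℕ → ℤ)
    (hω : IsKeySequence n ω) (hprim : IsPrimitive n ω) (halg : IsAlgebraicKeySeq n ω)
    (hθ : ∀ k, 1 ≤ k → k ≤ n → θ k ≠ 0) (hβ : IsRepTuple n ω β) :
    (∀ k, 1 ≤ k → k ≤ n →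
      MvPolynomial.coeff (Finsupp.single ((k : ℕ) : Fin (n + 2)) (alphaK ω k))
          (Ghat n ω θ β k) = -1 ∧
        ∀ m ∈ (Ghat n ω θ β k).support,
          m ≠ Finsupp.single ((k : ℕ) : Fin (n + 2)) (alphaK ω k) →
            Prec n ω m (Finsupp.single ((k : ℕ) : Fin (n + 2)) (alphaK ω k))) := by
  intro k hk1 hkn
  have hkno : k < n + 2 := by omega
  have hk1o : k + 1 < n + 2 := by omega
  have hKval : (((k : ℕ) : Fin (n + 2)) : ℕ) = k := Fin.val_cast_of_lt hkno
  have hK1val : (((k + 1 : ℕ) : Fin (n + 2)) : ℕ) = k + 1 := Fin.val_cast_of_lt hk1o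
  set K : Fin (n + 2) := ((k : ℕ) : Fin (n + 2)) with hK
  set K1 : Fin (n + 2) := ((k + 1 : ℕ) : Fin (n + 2)) with hK1
  set a : ℕ := ((alphaK ω k : ℤ) * ω k - ω (k + 1)).toNat with ha
  set m1 : Fin (n + 2) →₀ ℕ := Finsupp.single 0 a + Finsupp.single K1 1 with hm1def
  set m2 : Fin (n + 2) →₀ ℕ := Finsupp.single K (alphaK ω k) with hm2def
  set m3 : Fin (n + 2) →₀ ℕ :=
    ∑ j ∈ Finset.Ico 1 k, Finsupp.single ((j : ℕ) : Fin (n + 2)) ((β k j).toNat) with hm3def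
  have hαpos := alpha_pos n ω hω hprim k hk1 hkn
  -- normal form of Ghat
  have hGeq : Ghat n ω θ β k
      = MvPolynomial.monomial m1 1 - MvPolynomial.monomial m2 1
        + MvPolynomial.monomial m3 (θ k) := by
    rw [Ghat, prod_X_pow, ← pow_one (MvPolynomial.X K1)]
    simp only [MvPolynomial.X_pow_eq_monomial]
    rw [MvPolynomial.monomial_mul, MvPolynomial.C_mul_monomial, one_mul, mul_one,
      ← hm1def, ← hm2def, ← hm3def]
    ring
  -- m3 vanishes at indices ≥ k
  have hm3app : ∀ i : Fin (n + 2), k ≤ (i : ℕ) → m3 i = 0 := by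
    intro i hi
    rw [hm3def, Finsupp.finset_sum_apply]
    apply Finset.sum_eq_zero
    intro j hj
    rw [Finset.mem_Ico] at hj
    apply Finsupp.single_eq_of_ne'
    intro hji
    have hjval : (((j : ℕ) : Fin (n + 2)) : ℕ) = j := Fin.val_cast_of_lt (by omega)
    rw [hji] at hjval
    omega
  have hm2app : ∀ i : Fin (n + 2), K ≠ i → m2 i = 0 := by
    intro i hi
    rw [hm2def]
    exact Finsupp.single_eq_of_ne' hi
  -- distinctness
  have hm1ne : m1 ≠ m2 := by
    intro h
    have h1 : m1 K1 = m2 K1 := by rw [h]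
    have h2 : m1 K1 = 1 := by
      rw [hm1def, Finsupp.add_apply, Finsupp.single_eq_same,
        Finsupp.single_eq_of_ne' (by intro h0; rw [← h0] at hK1val; simp at hK1val)]
    have h3 : m2 K1 = 0 := hm2app K1 (by
      intro h0
      rw [h0] at hKval
      omega)
    omega
  have hm3ne : m3 ≠ m2 := by
    intro h
    have h1 : m3 K = m2 K := by rw [h]
    have h2 : m3 K = 0 := hm3app K (by omega)
    have h3 : m2 K = alphaK ω k := by rw [hm2def, Finsupp.single_eq_same]
    omega
  constructor
  · rw [hGeq, MvPolynomial.coeff_add, MvPolynomial.coeff_sub,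
      MvPolynomial.coeff_monomial, MvPolynomial.coeff_monomial, MvPolynomial.coeff_monomial,
      if_neg hm1ne, if_pos rfl, if_neg hm3ne]
    ring
  · intro m hm hne
    have hc := MvPolynomial.mem_support_iff.mp hm
    rw [hGeq] at hc
    have hmc : m = m1 ∨ m = m3 := by
      by_contra hcon
      push_neg at hcon
      rw [MvPolynomial.coeff_add, MvPolynomial.coeff_sub,
        MvPolynomial.coeff_monomial, MvPolynomial.coeff_monomial, MvPolynomial.coeff_monomial,
        if_neg (Ne.symm hcon.1), if_neg (Ne.symm hne), if_neg (Ne.symm hcon.2)] at hc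
      simp at hc
    -- weights
    have hωk1 : omegaHat n ω K1 = ω (k + 1) := by
      rw [omegaHat, if_neg (by intro h0; rw [h0] at hK1val; simp at hK1val), hK1val]
    have hωK : omegaHat n ω K = ω k := by
      rw [omegaHat, if_neg (by intro h0; rw [h0] at hKval; simp at hKval; omega), hKval]
    have hWm1 : Wt n ω m1 = ω (k + 1) := by
      rw [hm1def, Wt_add, Wt_single, Wt_single, hωk1]
      rw [omegaHat, if_pos rfl]
      ring
    have hWm2 : Wt n ω m2 = (alphaK ω k : ℤ) * ω k := by
      rw [hm2def, Wt_single, hωK]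
    have hWm3 : Wt n ω m3 = ∑ j ∈ Finset.Ico 1 k, β k j * ω j := by
      rw [hm3def, Wt_sum]
      apply Finset.sum_congr rfl
      intro j hj
      rw [Finset.mem_Ico] at hj
      have hjval : (((j : ℕ) : Fin (n + 2)) : ℕ) = j := Fin.val_cast_of_lt (by omega)
      rw [Wt_single, omegaHat, if_neg (by intro h0; rw [h0] at hjval; simp at hjval; omega),
        hjval, Int.toNat_of_nonneg ((hβ k hk1 hkn).1 j hj.1 hj.2).1]
    rcases hmc with rfl | rfl
    · -- m = m1 : strictly smaller weight
      rw [prec_iff]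
      left
      rw [hWm1, hWm2]
      exact hω.2.2 k hk1 hkn
    · -- m = m3
      rw [prec_iff]
      have hsum := (hβ k hk1 hkn).2
      have hsplit : (alphaK ω k : ℤ) * ω k = β k 0 * ω 0 + ∑ j ∈ Finset.Ico 1 k, β k j * ω j := by
        rw [hsum, Finset.range_eq_Ico, Finset.sum_eq_sum_Ico_succ_bot (by omega : 0 < k)]
      have hb0 : 0 ≤ β k 0 := beta0_nonneg n ω β hω hprim halg hβ hk1 hkn
      have hω0 : 1 ≤ ω 0 := hω.1
      have hnn : 0 ≤ β k 0 * ω 0 := mul_nonneg hb0 (by omega)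
      rcases hnn.lt_or_eq with hpos | hzero
      · left
        rw [hWm3, hWm2, hsplit]
        omega
      · right
        refine ⟨by rw [hWm3, hWm2, hsplit]; omega, K, ?_, ?_⟩
        · rw [hm3app K (by omega), hm2def, Finsupp.single_eq_same]
          exact_mod_cast hαpos
        · intro j hj
          rw [Fin.lt_def] at hj
          rw [hm3app j (by omega), hm2app j (by
            intro h0
            rw [← h0] at hj
            omega)]

/-- `≺` is a monomial order on `Â` (irreflexive, transitive, total, compatible with
multiplication of monomials, with `1` as least monomial), and for each `1 ≤ k ≤ n` the
`≺`-largest monomial of `Ĝ_k` is `ŷ_k^{α_k}`, which occurs with coefficient `−1`. -/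
theorem stmt7 (n : ℕ) (ω : ℕ → ℤ) (θ : ℕ → ℂ) (β : ℕ → ℕ → ℤ)
    (hω : IsKeySequence n ω) (hprim : IsPrimitive n ω) (halg : IsAlgebraicKeySeq n ω)
    (hθ : ∀ k, 1 ≤ k → k ≤ n → θ k ≠ 0) (hβ : IsRepTuple n ω β) :
    (∀ u, ¬ Prec n ω u u) ∧
    (∀ u v w, Prec n ω u v → Prec n ω v w → Prec n ω u w) ∧
    (∀ u v, u ≠ v → Prec n ω u v ∨ Prec n ω v u) ∧
    (∀ u v w, Prec n ω u v → Prec n ω (u + w) (v + w)) ∧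
    (∀ u, u ≠ 0 → Prec n ω 0 u) ∧
    (∀ k, 1 ≤ k → k ≤ n →
      MvPolynomial.coeff (Finsupp.single ((k : ℕ) : Fin (n + 2)) (alphaK ω k))
          (Ghat n ω θ β k) = -1 ∧
        ∀ m ∈ (Ghat n ω θ β k).support,
          m ≠ Finsupp.single ((k : ℕ) : Fin (n + 2)) (alphaK ω k) →
            Prec n ω m (Finsupp.single ((k : ℕ) : Fin (n + 2)) (alphaK ω k))) :=
  ⟨prec_irrefl n ω, prec_trans n ω, prec_total n ω, prec_add n ω,
    prec_zero n ω (fun j h1 h2 => omega_pos n ω hω hprim j h2),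
    stmt7' n ω θ β hω hprim halg hθ hβ⟩
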